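/- Let 0 ≤ k_min < k_max, ℓ > 0, and p ∈ (0, 1), and define G : ℝ → ℝ by G(v) = v·(k_min·v^p + k_max·ℓ)/(v^p + ℓ). Then G is strictly increasing and strictly concave on (0, ∞). -/

import Mathlib

open Real Set

/-- Composition of the rational concave factor with a sublinear power:
`G(v) = v·(k_min·v^p + k_max·ℓ)/(v^p + ℓ)` is strictly increasing and strictly
concave on `(0, ∞)` for `p ∈ (0, 1)`. -/

theorem stmt_16 (kmin kmax ℓ p : ℝ)
    (hkmin : 0 ≤ kmin) (hk : kmin < kmax) (hℓ : 0 < ℓ)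
    (hp0 : 0 < p) (hp1 : p < 1) :
    StrictMonoOn
      (fun v : ℝ => v * (kmin * v ^ p + kmax * ℓ) / (v ^ p + ℓ)) (Set.Ioi 0) ∧
    StrictConcaveOn ℝ (Set.Ioi (0 : ℝ))
      (fun v : ℝ => v * (kmin * v ^ p + kmax * ℓ) / (v ^ p + ℓ)) := by
  set f : ℝ → ℝ := fun v : ℝ => v * (kmin * v ^ p + kmax * ℓ) / (v ^ p + ℓ) with hf
  set c : ℝ := kmax - kmin with hc
  have hcpos : 0 < c := sub_pos.2 hk
  set g : ℝ → ℝ := fun v : ℝ =>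
    kmin + c * ℓ * ((1 - p) * v ^ p + ℓ) / (v ^ p + ℓ) ^ 2 with hg
  have hDpos : ∀ v : ℝ, 0 < v → 0 < v ^ p + ℓ := fun v hv =>
    add_pos (rpow_pos_of_pos hv p) hℓ
  have hw : ∀ v : ℝ, v ≠ 0 → v ^ (p - 1) = v ^ p / v := by
    intro v hv0
    rw [eq_div_iff hv0, ← Real.rpow_add_one hv0, sub_add_cancel]
  have hderiv : ∀ v : ℝ, 0 < v → HasDerivAt f (g v) v := by
    intro v hv
    have hv0 : v ≠ 0 := ne_of_gt hv
    have hu : HasDerivAt (fun v : ℝ => v ^ p) (p * (v ^ p / v)) v := by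
      rw [← hw v hv0]; exact Real.hasDerivAt_rpow_const (Or.inl hv0)
    have hnum : HasDerivAt (fun v : ℝ => v * (kmin * v ^ p + kmax * ℓ))
        (1 * (kmin * v ^ p + kmax * ℓ) + v * (kmin * (p * (v ^ p / v)))) v :=
      (hasDerivAt_id v).mul ((hu.const_mul kmin).add_const _)
    have hden : HasDerivAt (fun v : ℝ => v ^ p + ℓ) (p * (v ^ p / v)) v :=
      hu.add_const _
    have hD : v ^ p + ℓ ≠ 0 := ne_of_gt (hDpos v hv)
    have h := hnum.div hden hD
    refine h.congr_deriv ?_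
    rw [hg]
    field_simp
    ring
  have hgderiv : ∀ v : ℝ, 0 < v → HasDerivAt g
      (c * ℓ * (p * (v ^ p / v) * (-((1 - p) * v ^ p) - (1 + p) * ℓ)) /
        (v ^ p + ℓ) ^ 3) v := by
    intro v hv
    have hv0 : v ≠ 0 := ne_of_gt hv
    have hu : HasDerivAt (fun v : ℝ => v ^ p) (p * (v ^ p / v)) v := by
      rw [← hw v hv0]; exact Real.hasDerivAt_rpow_const (Or.inl hv0)
    have hN : HasDerivAt (fun v : ℝ => c * ℓ * ((1 - p) * v ^ p + ℓ))
        (c * ℓ * ((1 - p) * (p * (v ^ p / v)))) v := by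
      exact (((hu.const_mul (1 - p)).add_const _).const_mul (c * ℓ))
    have hden : HasDerivAt (fun v : ℝ => (v ^ p + ℓ) ^ 2)
        (2 * (v ^ p + ℓ) ^ 1 * (p * (v ^ p / v))) v := by
      exact (hu.add_const _).pow 2
    have hD : (v ^ p + ℓ) ^ 2 ≠ 0 := pow_ne_zero _ (ne_of_gt (hDpos v hv))
    have h := ((hN.div hden hD).const_add kmin)
    refine h.congr_deriv ?_
    have hD0 : v ^ p + ℓ ≠ 0 := ne_of_gt (hDpos v hv)
    field_simp
    ring
  have hcont : ContinuousOn f (Set.Ioi (0:ℝ)) := by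
    intro v hv
    exact ((hderiv v hv).continuousAt).continuousWithinAt
  have hderiv_eq : ∀ v : ℝ, 0 < v → deriv f v = g v := fun v hv =>
    (hderiv v hv).deriv
  constructor
  · apply strictMonoOn_of_deriv_pos (convex_Ioi 0) hcont
    intro x hx
    rw [interior_Ioi] at hx
    rw [hderiv_eq x hx, hg]
    have h1 : 0 < c * ℓ * ((1 - p) * x ^ p + ℓ) / (x ^ p + ℓ) ^ 2 := by
      apply div_pos
      · exact mul_pos (mul_pos hcpos hℓ)
          (add_pos_of_nonneg_of_pos
            (mul_nonneg (by linarith) (rpow_pos_of_pos hx p).le) hℓ)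
      · exact pow_pos (hDpos x hx) 2
    linarith
  · apply strictConcaveOn_of_deriv2_neg (convex_Ioi 0) hcont
    intro x hx
    rw [interior_Ioi] at hx
    have hEq : deriv f =ᶠ[nhds x] g := by
      filter_upwards [Ioi_mem_nhds hx] with y hy using hderiv_eq y hy
    have : deriv (deriv f) x = deriv g x := Filter.EventuallyEq.deriv_eq hEq
    simp only [Function.iterate_succ, Function.iterate_zero, Function.comp,
      Function.id_def]
    rw [show deriv (deriv f) x = deriv g x from hEq.deriv_eq,
      (hgderiv x hx).deriv]
    have hup : 0 < x ^ p := rpow_pos_of_pos hx p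
    have hnum : c * ℓ * (p * (x ^ p / x) * (-((1 - p) * x ^ p) - (1 + p) * ℓ)) < 0 := by
      apply mul_neg_of_pos_of_neg (mul_pos hcpos hℓ)
      apply mul_neg_of_pos_of_neg (mul_pos hp0 (div_pos hup hx))
      nlinarith
    exact div_neg_of_neg_of_pos hnum (pow_pos (hDpos x hx) 3)
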